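/- Let G be a finite group, X a finite G-set, H a subgroup of G, A a finite set with |A| ≥ 2, a ∈ A, A' = A∖{a}, and N a nonempty set of nonnegative integers. For each i ≥ 1, let O_i be the number of H-orbits of X of cardinality i. Consider functions f : X → (finite words over A') such that the length of f(x) lies in N for every x ∈ X and f is H-invariant, i.e., f(h•x) = f(x) for all h ∈ H and x ∈ X; set deg(f) = Σ_{x∈X} length(f(x)). Then in the ring of formal power series over ℤ: Σ_{n≥0} #{H-invariant f with deg(f) = n}·tⁿ = Π_{i≥1} (Σ_{m∈N} (|A'|·t^i)^m)^{O_i}, where the product is over the finitely many i with O_i ≠ 0 and the inner sum Σ_{m∈N} |A'|^m·t^{im} is a well-defined formal power series. -/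

import Mathlib

open scoped Classical

private lemma aux_natCard_sigma {ι : Type*} [Fintype ι] (f : ι → Type*) [∀ i, Finite (f i)] :
    Nat.card (Σ i, f i) = ∑ i, Nat.card (f i) := by
  letI : ∀ i, Fintype (f i) := fun i => Fintype.ofFinite _
  simp [Nat.card_eq_fintype_card]

private lemma aux_len_eq {α : Type*} {N : Set ℕ} {d k : ℕ} (hd : 0 < d)
    (w : {w : List α // w.length ∈ N ∧ d * w.length = k}) : w.1.length = k / d :=
  (Nat.div_eq_of_eq_mul_right hd w.2.2.symm).symm

private lemma aux_count_words {α : Type*} [Fintype α] (N : Set ℕ) (d k : ℕ) (hd : 0 < d) :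
    Nat.card {w : List α // w.length ∈ N ∧ d * w.length = k} =
      if d ∣ k ∧ k / d ∈ N then Fintype.card α ^ (k / d) else 0 := by
  split_ifs with h
  · have e : {w : List α // w.length ∈ N ∧ d * w.length = k} ≃ List.Vector α (k / d) :=
      { toFun := fun w => ⟨w.1, aux_len_eq hd w⟩
        invFun := fun v => ⟨v.1, by rw [v.2]; exact h.2, by rw [v.2, Nat.mul_div_cancel' h.1]⟩
        left_inv := fun w => rfl
        right_inv := fun v => rfl }
    rw [Nat.card_congr e, Nat.card_eq_fintype_card, card_vector]
  · have : IsEmpty {w : List α // w.length ∈ N ∧ d * w.length = k} := by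
      constructor
      rintro ⟨w, hw1, hw2⟩
      exact h ⟨⟨w.length, hw2.symm⟩, by rw [← hw2, Nat.mul_div_cancel_left _ hd]; exact hw1⟩
    exact Nat.card_of_isEmpty

private lemma aux_finite_words {α : Type*} [Fintype α] (N : Set ℕ) (d k : ℕ) (hd : 0 < d) :
    Finite {w : List α // w.length ∈ N ∧ d * w.length = k} := by
  exact Finite.of_injective (β := List.Vector α (k / d))
    (fun w => ⟨w.1, aux_len_eq hd w⟩)
    (fun w w' hww => Subtype.ext (congrArg List.Vector.toList hww))

set_option maxHeartbeats 1000000 in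
private lemma aux_count_main {α : Type*} [Fintype α] {ι : Type*} [Fintype ι] (N : Set ℕ)
    (d : ι → ℕ) (hd : ∀ i, 0 < d i) (n : ℕ) :
    Nat.card {g : ι → List α // (∀ i, (g i).length ∈ N) ∧ ∑ i, d i * (g i).length = n} =
      ∑ l ∈ Finset.finsuppAntidiag (Finset.univ : Finset ι) n,
        ∏ i, (if d i ∣ l i ∧ l i / d i ∈ N then Fintype.card α ^ (l i / d i) else 0) := by
  set S := {g : ι → List α // (∀ i, (g i).length ∈ N) ∧ ∑ i, d i * (g i).length = n} with hS
  set B := ↥(Finset.finsuppAntidiag (Finset.univ : Finset ι) n) with hB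
  let q : S → B := fun g =>
    ⟨Finsupp.equivFunOnFinite.symm fun i => d i * (g.1 i).length, by
      rw [Finset.mem_finsuppAntidiag]
      exact ⟨(Finset.sum_congr rfl fun i _ => by simp).trans g.2.2,
        fun i _ => Finset.mem_univ i⟩⟩
  let T : B → ι → Type _ := fun b i =>
    {w : List α // w.length ∈ N ∧ d i * w.length = (b : ι →₀ ℕ) i}
  have E : ∀ b : B, {s : S // q s = b} ≃ ∀ i, T b i := fun b =>
    { toFun := fun s i =>
        ⟨s.1.1 i, s.1.2.1 i, by
          have h := congrArg (fun z : B => (z : ι →₀ ℕ) i) s.2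
          simpa [q] using h⟩
      invFun := fun v =>
        ⟨⟨fun i => (v i).1, fun i => (v i).2.1, by
          have hb := (Finset.mem_finsuppAntidiag.mp b.2).1
          calc ∑ i, d i * ((v i).1).length = ∑ i, (b : ι →₀ ℕ) i :=
                Finset.sum_congr rfl fun i _ => (v i).2.2
            _ = n := hb⟩, by
          apply Subtype.ext
          apply Finsupp.ext
          intro i
          simpa [q] using (v i).2.2⟩
      left_inv := fun s => Subtype.ext (Subtype.ext rfl)
      right_inv := fun v => funext fun i => Subtype.ext rfl }
  haveI : ∀ b : B, ∀ i, Finite (T b i) := fun b i => aux_finite_words N (d i) _ (hd i)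
  haveI : ∀ b : B, Finite {s : S // q s = b} := fun b => Finite.of_equiv _ (E b).symm
  calc Nat.card S = Nat.card (Σ b : B, {s : S // q s = b}) :=
        (Nat.card_congr (Equiv.sigmaFiberEquiv q)).symm
    _ = ∑ b : B, Nat.card {s : S // q s = b} := aux_natCard_sigma _
    _ = ∑ b : B, ∏ i, (if d i ∣ (b : ι →₀ ℕ) i ∧ (b : ι →₀ ℕ) i / d i ∈ N then
          Fintype.card α ^ ((b : ι →₀ ℕ) i / d i) else 0) := by
        refine Finset.sum_congr rfl fun b _ => ?_
        rw [Nat.card_congr (E b), Nat.card_pi]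
        exact Finset.prod_congr rfl fun i _ => aux_count_words N (d i) _ (hd i)
    _ = _ := Finset.sum_coe_sort _
          (fun l : ι →₀ ℕ =>
            ∏ i, (if d i ∣ l i ∧ l i / d i ∈ N then Fintype.card α ^ (l i / d i) else 0))

private lemma aux_sum_quot {G X : Type*} [Group G] [Fintype X] [MulAction G X] (H : Subgroup G)
    (F : MulAction.orbitRel.Quotient H X → ℕ) :
    ∑ x : X, F (Quotient.mk'' x) =
      ∑ ω : MulAction.orbitRel.Quotient H X,
        Nat.card (MulAction.orbitRel.Quotient.orbit ω) * F ω := by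
  rw [← Finset.sum_fiberwise Finset.univ
    (fun x => (Quotient.mk'' x : MulAction.orbitRel.Quotient H X))
    (fun x => F (Quotient.mk'' x))]
  refine Finset.sum_congr rfl fun ω _ => ?_
  have h1 : ∀ x ∈ Finset.univ.filter
      (fun x => (Quotient.mk'' x : MulAction.orbitRel.Quotient H X) = ω),
      F (Quotient.mk'' x) = F ω := by
    intro x hx
    rw [(Finset.mem_filter.mp hx).2]
  rw [Finset.sum_congr rfl h1, Finset.sum_const, smul_eq_mul]
  congr 1
  have e : MulAction.orbitRel.Quotient.orbit ω ≃
      {x : X // (Quotient.mk'' x : MulAction.orbitRel.Quotient H X) = ω} :=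
    Equiv.subtypeEquivRight fun x => MulAction.orbitRel.Quotient.mem_orbit
  rw [Nat.card_congr e, Nat.card_eq_fintype_card, Fintype.card_subtype]

private lemma aux_invariant_count {G X : Type*} [Group G] [Fintype X] [MulAction G X]
    (H : Subgroup G) {α : Type*} (N : Set ℕ) (n : ℕ) :
    Nat.card {f : X → List α //
        (∀ x, (f x).length ∈ N) ∧ (∀ h ∈ H, ∀ x, f (h • x) = f x) ∧
        (∑ x, (f x).length) = n} =
    Nat.card {g : MulAction.orbitRel.Quotient H X → List α //
        (∀ ω, (g ω).length ∈ N) ∧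
        ∑ ω, Nat.card (MulAction.orbitRel.Quotient.orbit ω) * (g ω).length = n} := by
  refine Nat.card_congr (Equiv.symm
    { toFun := fun g =>
        ⟨fun x => g.1 (Quotient.mk'' x), fun x => g.2.1 _,
          fun h hh x => by
            have hq : (Quotient.mk'' (h • x) : MulAction.orbitRel.Quotient H X)
                = Quotient.mk'' x :=
              Quotient.sound' ((MulAction.orbitRel_apply (G := H) (α := X)).mpr (MulAction.mem_orbit x (⟨h, hh⟩ : H)))
            exact congrArg g.1 hq,
          (aux_sum_quot H fun ω => (g.1 ω).length).trans g.2.2⟩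
      invFun := fun f =>
        ⟨fun ω => Quotient.liftOn' ω f.1 (fun x y hxy => by
            have hxy' : x ∈ MulAction.orbit H y := hxy
            obtain ⟨h, rfl⟩ := hxy'
            exact f.2.2.1 h h.2 y),
          fun ω => by
            induction ω using Quotient.inductionOn' with
            | h x => exact f.2.1 x,
          by rw [← aux_sum_quot H]; exact f.2.2.2⟩
      left_inv := fun g => Subtype.ext (funext fun ω => by
        induction ω using Quotient.inductionOn' with
        | h x => rfl)
      right_inv := fun f => Subtype.ext (funext fun x => rfl) })

theorem invariant_words_generating_function {G X : Type*} [Group G] [Fintype G]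
    [Fintype X] [MulAction G X] (H : Subgroup G)
    (A : Type*) [Fintype A] (hA : 2 ≤ Fintype.card A) (a : A)
    (N : Set ℕ) (hN : N.Nonempty) (O : ℕ → ℕ)
    (hO : ∀ i, O i =
      Nat.card {ω : MulAction.orbitRel.Quotient H X // Nat.card ω.orbit = i}) :
    (PowerSeries.mk fun n =>
        (Nat.card {f : X → List {b : A // b ≠ a} //
          (∀ x, (f x).length ∈ N) ∧ (∀ h ∈ H, ∀ x, f (h • x) = f x) ∧
          (∑ x, (f x).length) = n} : ℤ)) =
      ∏ i ∈ Finset.Icc 1 (Fintype.card X),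
        (PowerSeries.mk fun k =>
            if i ∣ k ∧ k / i ∈ N then
              ((Fintype.card {b : A // b ≠ a} : ℤ)) ^ (k / i)
            else 0) ^ (O i) := by
  set Q := MulAction.orbitRel.Quotient H X with hQ
  have hd : ∀ ω : Q, 0 < Nat.card (MulAction.orbitRel.Quotient.orbit ω) := fun ω => by
    haveI := (MulAction.orbitRel.Quotient.nonempty_orbit ω).to_subtype
    exact Nat.card_pos
  have hmaps : ∀ ω : Q, ω ∈ (Finset.univ : Finset Q) →
      Nat.card (MulAction.orbitRel.Quotient.orbit ω) ∈ Finset.Icc 1 (Fintype.card X) := by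
    intro ω _
    rw [Finset.mem_Icc]
    refine ⟨hd ω, ?_⟩
    calc Nat.card (MulAction.orbitRel.Quotient.orbit ω) ≤ Nat.card X :=
          Nat.card_le_card_of_injective _ Subtype.val_injective
      _ = Fintype.card X := Nat.card_eq_fintype_card
  have hprod : (∏ i ∈ Finset.Icc 1 (Fintype.card X),
        (PowerSeries.mk fun k =>
            if i ∣ k ∧ k / i ∈ N then
              ((Fintype.card {b : A // b ≠ a} : ℤ)) ^ (k / i)
            else 0) ^ (O i)) =
      ∏ ω : Q, (PowerSeries.mk fun k =>
            if Nat.card (MulAction.orbitRel.Quotient.orbit ω) ∣ k ∧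
                k / Nat.card (MulAction.orbitRel.Quotient.orbit ω) ∈ N then
              ((Fintype.card {b : A // b ≠ a} : ℤ)) ^
                (k / Nat.card (MulAction.orbitRel.Quotient.orbit ω))
            else 0) := by
    refine Eq.trans ?_ (Finset.prod_fiberwise_of_maps_to' hmaps
      (fun i => (PowerSeries.mk fun k =>
        if i ∣ k ∧ k / i ∈ N then
          ((Fintype.card {b : A // b ≠ a} : ℤ)) ^ (k / i) else 0)))
    refine Finset.prod_congr rfl fun i _ => ?_
    rw [Finset.prod_const]
    congr 1
    rw [hO i, Nat.card_eq_fintype_card, Fintype.card_subtype]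
  rw [hprod]
  ext n
  rw [PowerSeries.coeff_mk, PowerSeries.coeff_prod,
    aux_invariant_count H N n,
    aux_count_main N (fun ω : Q => Nat.card (MulAction.orbitRel.Quotient.orbit ω)) hd n]
  push_cast
  push_cast
  simp only [PowerSeries.coeff_mk]
  congr!
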